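/- Let f : ℝⁿ × ℝᵐ → ℝⁿ be continuous, let 𝒰 ⊆ ℝᵐ be nonempty and compact, let K ⊆ ℝⁿ be nonempty and compact, let V₁ : ℝⁿ → ℝ be continuous, and let W(x,u) = xᵀQx + uᵀRu where Q ∈ ℝⁿˣⁿ and R ∈ ℝᵐˣᵐ are positive definite. Assume that for every x ∈ K there exists u ∈ 𝒰 with V₁(f(x,u)) < V₁(x). Then there exists α₀ > 0 such that for every x ∈ K there exists u ∈ 𝒰 with W(x,u) ≤ α₀·(V₁(x) − V₁(f(x,u))); that is, the terminal cost α₀·V₁ is a local control Lyapunov function for the stage cost W on K. -/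

import Mathlib

open Matrix

/-- Existence of a sufficiently large terminal-cost weight `α₀`: if from every state of
the compact set `K` there is an admissible input strictly decreasing `V₁`, then there is
`α₀ > 0` such that `α₀ · V₁` is a local control Lyapunov function for the quadratic stage
cost `W(x,u) = xᵀQx + uᵀRu` on `K`. -/
theorem exists_alpha_control_lyapunov
    {n m : ℕ} (f : (Fin n → ℝ) → (Fin m → ℝ) → (Fin n → ℝ))
    (hf : Continuous fun p : (Fin n → ℝ) × (Fin m → ℝ) => f p.1 p.2)
    (U : Set (Fin m → ℝ)) (hU₀ : U.Nonempty) (hU : IsCompact U)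
    (K : Set (Fin n → ℝ)) (hK₀ : K.Nonempty) (hK : IsCompact K)
    (V₁ : (Fin n → ℝ) → ℝ) (hV₁ : Continuous V₁)
    (Q : Matrix (Fin n) (Fin n) ℝ) (R : Matrix (Fin m) (Fin m) ℝ)
    (hQ : Q.PosDef) (hR : R.PosDef)
    (W : (Fin n → ℝ) → (Fin m → ℝ) → ℝ)
    (hW : ∀ (x : Fin n → ℝ) (u : Fin m → ℝ), W x u = x ⬝ᵥ Q *ᵥ x + u ⬝ᵥ R *ᵥ u)
    (hdec : ∀ x ∈ K, ∃ u ∈ U, V₁ (f x u) < V₁ x) :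
    ∃ α₀ > 0, ∀ x ∈ K, ∃ u ∈ U, W x u ≤ α₀ * (V₁ x - V₁ (f x u)) := by
  classical
  obtain ⟨u0, hu0⟩ := hU₀
  obtain ⟨x0, hx0⟩ := hK₀
  -- totalize the choice of a decreasing input
  have hch : ∀ x : Fin n → ℝ, ∃ v, v ∈ U ∧ (x ∈ K → V₁ (f x v) < V₁ x) := by
    intro x
    by_cases h : x ∈ K
    · obtain ⟨v, hvU, hv⟩ := hdec x h
      exact ⟨v, hvU, fun _ => hv⟩
    · exact ⟨u0, hu0, fun hx => absurd hx h⟩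
  choose uu huuU huu using hch
  set G : (Fin n → ℝ) → (Fin n → ℝ) → ℝ := fun x y => V₁ y - V₁ (f y (uu x)) with hG
  have hGc : ∀ x, Continuous fun y => G x y := by
    intro x
    exact hV₁.sub (hV₁.comp (hf.comp (continuous_id.prodMk continuous_const)))
  have hGpos : ∀ x ∈ K, 0 < G x x := fun x hx => sub_pos.mpr (huu x hx)
  -- open cover
  set O : (Fin n → ℝ) → Set (Fin n → ℝ) := fun x => {y | G x x / 2 < G x y} with hO
  have hOn : ∀ x ∈ K, O x ∈ nhds x := by
    intro x hx
    have : IsOpen (O x) := isOpen_lt continuous_const (hGc x)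
    exact this.mem_nhds (by simpa [hO] using half_lt_self (hGpos x hx))
  obtain ⟨t, htK, htc⟩ := hK.elim_nhds_subcover O hOn
  have htne : t.Nonempty := by
    obtain ⟨i, hi⟩ := Set.mem_iUnion₂.mp (htc hx0)
    exact ⟨i, hi.1⟩
  set δ : ℝ := t.inf' htne fun i => G i i / 2 with hδ
  have hδpos : 0 < δ := by
    rw [hδ, Finset.lt_inf'_iff]
    exact fun i hi => half_pos (hGpos i (htK i hi))
  -- maximum of W over K × U
  have hWc : Continuous fun p : (Fin n → ℝ) × (Fin m → ℝ) => W p.1 p.2 := by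
    simp only [hW]
    exact (continuous_fst.dotProduct ((continuous_const.matrix_mulVec
      continuous_fst) )).add (continuous_snd.dotProduct
      (continuous_const.matrix_mulVec continuous_snd))
  obtain ⟨p, hp, hpM⟩ := (hK.prod hU).exists_isMaxOn ⟨(x0, u0), ⟨hx0, hu0⟩⟩
    (hWc.continuousOn)
  set M : ℝ := W p.1 p.2 with hM
  refine ⟨(max M 0 + 1) / δ, div_pos (by positivity) hδpos, ?_⟩
  intro x hx
  obtain ⟨i, hit, hiO⟩ := Set.mem_iUnion₂.mp (htc hx)
  refine ⟨uu i, huuU i, ?_⟩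
  have h1 : W x (uu i) ≤ M := hpM (show ((x, uu i) : _ × _) ∈ K ×ˢ U from ⟨hx, huuU i⟩)
  have h2 : δ ≤ G i i / 2 := Finset.inf'_le _ hit
  have h3 : G i i / 2 < G i x := hiO
  have h4 : (max M 0 + 1) / δ * δ = max M 0 + 1 := div_mul_cancel₀ _ (ne_of_gt hδpos)
  have h5 : δ ≤ V₁ x - V₁ (f x (uu i)) := le_of_lt (lt_of_le_of_lt h2 h3)
  refine le_of_lt ?_
  calc W x (uu i) ≤ max M 0 := le_trans h1 (le_max_left _ _)
    _ < max M 0 + 1 := lt_add_one _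
    _ = (max M 0 + 1) / δ * δ := h4.symm
    _ ≤ (max M 0 + 1) / δ * (V₁ x - V₁ (f x (uu i))) := by
        apply mul_le_mul_of_nonneg_left h5 (le_of_lt (div_pos (by positivity) hδpos))
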